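/- Let m ≥ 1, let S be a 2m×2m real matrix that is both orthogonal (SᵀS = I) and symplectic (S Ω Sᵀ = Ω with Ω = [[0, I_m], [−I_m, 0]]), let D = diag(d₁, …, d_m) with all d_i ≥ 1, and set V = S · [[D, 0], [0, D⁻¹]] · Sᵀ and E = Σ_{i=1}^m (d_i + 1/d_i) (= Tr V). Writing V in block form V = [[Vx, Vxp], [Vxpᵀ, Vp]] with m×m blocks, the symplectic coherence satisfies ‖Vxp‖_F² ≤ (E − 2m)²/4 + (E − 2m). -/
import Mathlib


open Matrix

noncomputable section

/-- The standard symplectic form `Ω = [[0, I_m], [-I_m, 0]]` on `ℝ^(2m)`. -/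
def Omega (m : ℕ) : Matrix (Fin m ⊕ Fin m) (Fin m ⊕ Fin m) ℝ :=
  Matrix.fromBlocks 0 1 (-1) 0

/-- The squared Frobenius norm `‖A‖_F² = Σ_{i,j} A_{ij}²` of a real matrix. -/
def frobSq {n k : Type*} [Fintype n] [Fintype k] (A : Matrix n k ℝ) : ℝ :=
  ∑ i, ∑ j, (A i j) ^ 2

namespace SymplecticCoherenceAux

lemma frobSq_eq_trace {n : Type*} [Fintype n] (A : Matrix n n ℝ) :
    frobSq A = Matrix.trace (A * Aᵀ) := by
  simp [frobSq, Matrix.trace, Matrix.diag, Matrix.mul_apply, sq]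

lemma trace_cyc6 {n : Type*} [Fintype n] (A B C D E F : Matrix n n ℝ) :
    Matrix.trace (A*B*C*(D*(E*F))) = Matrix.trace (B*(C*D)*E*(F*A)) := by
  simp only [Matrix.mul_assoc]
  rw [Matrix.trace_mul_comm]
  simp only [Matrix.mul_assoc]

lemma expand_frob {m : ℕ} (X Y D₁ D₂ : Matrix (Fin m) (Fin m) ℝ)
    (h1 : D₁ᵀ = D₁) (h2 : D₂ᵀ = D₂) :
    frobSq (Y * D₂ * Xᵀ - X * D₁ * Yᵀ)
      = Matrix.trace (D₂*(Xᵀ*X)*D₂*(Yᵀ*Y)) + Matrix.trace (D₁*(Yᵀ*Y)*D₁*(Xᵀ*X))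
        - Matrix.trace (D₂*(Xᵀ*Y)*D₁*(Xᵀ*Y)) - Matrix.trace (D₁*(Yᵀ*X)*D₂*(Yᵀ*X)) := by
  rw [frobSq_eq_trace]
  rw [Matrix.transpose_sub, Matrix.transpose_mul, Matrix.transpose_mul, Matrix.transpose_mul,
    Matrix.transpose_mul, Matrix.transpose_transpose, Matrix.transpose_transpose, h1, h2]
  rw [Matrix.sub_mul, Matrix.mul_sub, Matrix.mul_sub]
  rw [Matrix.trace_sub, Matrix.trace_sub, Matrix.trace_sub]
  rw [trace_cyc6 Y D₂ Xᵀ X D₂ Yᵀ, trace_cyc6 X D₁ Yᵀ Y D₁ Xᵀ,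
      trace_cyc6 Y D₂ Xᵀ Y D₁ Xᵀ, trace_cyc6 X D₁ Yᵀ X D₂ Yᵀ]
  ring

lemma trace_diag_mul {m : ℕ} (x y : Fin m → ℝ) (A B : Matrix (Fin m) (Fin m) ℝ) :
    Matrix.trace (Matrix.diagonal x * A * Matrix.diagonal y * B)
      = ∑ j, ∑ k, x j * y k * (A j k * B k j) := by
  simp [Matrix.trace, Matrix.diag, Matrix.mul_apply, Matrix.diagonal_apply, ite_mul, mul_ite,
    zero_mul, mul_zero, Finset.sum_ite_eq, Finset.sum_ite_eq']
  apply Finset.sum_congr rfl; intro j _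
  apply Finset.sum_congr rfl; intro k _
  ring

lemma RJ_identity {m : ℕ} (X Y : Matrix (Fin m) (Fin m) ℝ)
    (r1 : Xᵀ * X + Yᵀ * Y = 1)
    (hg : Yᵀ * X = Xᵀ * Y)
    (r3 : X * Xᵀ + Y * Yᵀ = 1) :
    (Xᵀ*X - Yᵀ*Y) * (Xᵀ*X - Yᵀ*Y) + (Xᵀ*Y + Yᵀ*X) * (Xᵀ*Y + Yᵀ*X) = 1 := by
  have hb : Yᵀ * Y = 1 - Xᵀ * X := by rw [← r1]; abel
  have hyy : Y * Yᵀ = 1 - X * Xᵀ := by rw [← r3]; abel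
  have key : (Xᵀ*Y) * (Xᵀ*Y) = Xᵀ*X - Xᵀ*X*(Xᵀ*X) := by
    calc (Xᵀ*Y) * (Xᵀ*Y) = (Xᵀ*Y) * (Yᵀ*X) := by rw [hg]
    _ = Xᵀ*(Y*Yᵀ)*X := by simp only [Matrix.mul_assoc]
    _ = Xᵀ*(1 - X*Xᵀ)*X := by rw [hyy]
    _ = Xᵀ*X - Xᵀ*X*(Xᵀ*X) := by
        rw [Matrix.mul_sub, Matrix.mul_one, Matrix.sub_mul]
        simp only [Matrix.mul_assoc]
  rw [hb, hg]
  have expand : (Xᵀ*X - (1 - Xᵀ*X)) * (Xᵀ*X - (1 - Xᵀ*X)) + (Xᵀ*Y + Xᵀ*Y) * (Xᵀ*Y + Xᵀ*Y)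
      = (Xᵀ*X*(Xᵀ*X) - Xᵀ*X)*4 + 1 + ((Xᵀ*Y)*(Xᵀ*Y))*4 := by noncomm_ring
  rw [expand, key]
  noncomm_ring

lemma entry_diag (t u v : ℝ) (ht : 1 ≤ t) :
    t⁻¹*t⁻¹*(u*(1-u)) + t*t*((1-u)*u) - t⁻¹*t*(v*v) - t*t⁻¹*(v*v)
      ≤ (((t-t⁻¹)/2*((t-t⁻¹)/2) + (t+t⁻¹)/2*((t+t⁻¹)/2)) - (u+u-1)^2 - (v+v)^2)/2 := by
  have ht0 : (0:ℝ) < t := by linarith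
  have het : t * t⁻¹ = 1 := mul_inv_cancel₀ (ne_of_gt ht0)
  set e := t⁻¹ with he
  have h2 : 0 ≤ t*t + e*e - 2 := by nlinarith [sq_nonneg (t - e)]
  nlinarith [mul_nonneg h2 (sq_nonneg (u+u-1)), het]

lemma amgm_pair (x y : ℝ) (hx : 0 < x) (hy : 0 < y) (hxy : x * y = 1) : 2 ≤ x + y := by
  have h2 : x*x*y = x := by rw [mul_assoc, hxy, mul_one]
  nlinarith [mul_nonneg (sq_nonneg (x-1)) hy.le, h2]

lemma entry_off (s t u v : ℝ) (hs : 1 ≤ s) (ht : 1 ≤ t) :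
    s⁻¹*t⁻¹*(u*(0-u)) + s*t*((0-u)*u) - s⁻¹*t*(v*v) - s*t⁻¹*(v*v)
      ≤ (0 - (u+u-0)^2 - (v+v)^2)/2 := by
  have hs0 : (0:ℝ) < s := by linarith
  have ht0 : (0:ℝ) < t := by linarith
  have hes : s * s⁻¹ = 1 := mul_inv_cancel₀ (ne_of_gt hs0)
  have het : t * t⁻¹ = 1 := mul_inv_cancel₀ (ne_of_gt ht0)
  have hes0 : (0:ℝ) < s⁻¹ := by positivity
  have het0 : (0:ℝ) < t⁻¹ := by positivity
  set es := s⁻¹ with hesd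
  set et := t⁻¹ with hetd
  have hp : 2 ≤ s*t + es*et := by
    refine amgm_pair _ _ (mul_pos hs0 ht0) (mul_pos hes0 het0) ?_
    calc s*t*(es*et) = (s*es)*(t*et) := by ring
    _ = 1 := by rw [hes, het, mul_one]
  have hq : 2 ≤ es*t + s*et := by
    refine le_of_eq_of_le (by ring)
      (amgm_pair (es*t) (s*et) (mul_pos hes0 ht0) (mul_pos hs0 het0) ?_)
    calc es*t*(s*et) = (s*es)*(t*et) := by ring
    _ = 1 := by rw [hes, het, mul_one]
  nlinarith [mul_nonneg (by linarith : (0:ℝ) ≤ s*t + es*et - 2) (sq_nonneg u),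
             mul_nonneg (by linarith : (0:ℝ) ≤ es*t + s*et - 2) (sq_nonneg v)]

lemma sum_comb {m : ℕ} (A B C D : Fin m → Fin m → ℝ) :
    ((∑ j, ∑ k, A j k) + (∑ j, ∑ k, B j k) - (∑ j, ∑ k, C j k)) - (∑ j, ∑ k, D j k)
      = ∑ j, ∑ k, (A j k + B j k - C j k - D j k) := by
  rw [← Finset.sum_add_distrib, ← Finset.sum_sub_distrib, ← Finset.sum_sub_distrib]
  refine Finset.sum_congr rfl fun j _ => ?_
  rw [← Finset.sum_add_distrib, ← Finset.sum_sub_distrib, ← Finset.sum_sub_distrib]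

end SymplecticCoherenceAux

open SymplecticCoherenceAux

/-- Maximal symplectic coherence of pure Gaussian states: if `S` is a symplectic orthogonal
`2m × 2m` matrix, `D = diag(d₁, …, d_m)` with all `d_i ≥ 1`, `V = S ⬝ [[D,0],[0,D⁻¹]] ⬝ Sᵀ`
(the Bloch–Messiah form of a pure Gaussian covariance matrix) and
`E = Σ_i (d_i + 1/d_i) = Tr V`, then the position-momentum block `Vxp` of `V` satisfies
`‖Vxp‖_F² ≤ (E − 2m)²/4 + (E − 2m)`. -/
theorem pureGaussian_symplecticCoherence_le_max (m : ℕ) (hm : 1 ≤ m)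
    (S : Matrix (Fin m ⊕ Fin m) (Fin m ⊕ Fin m) ℝ)
    (hOrth : Sᵀ * S = 1)
    (hSymp : S * Omega m * Sᵀ = Omega m)
    (d : Fin m → ℝ) (hd : ∀ i, 1 ≤ d i)
    (E : ℝ) (hE : E = ∑ i, (d i + 1 / d i)) :
    frobSq ((S * fromBlocks (diagonal d) 0 0 (diagonal fun i => (d i)⁻¹) * Sᵀ).toBlocks₁₂) ≤
      (E - 2 * m) ^ 2 / 4 + (E - 2 * m) := by
  have hd0 : ∀ i, (0:ℝ) < d i := fun i => lt_of_lt_of_le one_pos (hd i)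
  have hdinv : ∀ i, d i * (d i)⁻¹ = 1 := fun i => mul_inv_cancel₀ (ne_of_gt (hd0 i))
  -- block structure
  have hcomm : S * Omega m = Omega m * S := by
    have h := congrArg (· * S) hSymp
    simpa [Matrix.mul_assoc, hOrth] using h
  rw [← Matrix.fromBlocks_toBlocks S, Omega] at hcomm
  rw [Matrix.fromBlocks_multiply, Matrix.fromBlocks_multiply] at hcomm
  simp only [Matrix.mul_zero, Matrix.mul_one, Matrix.mul_neg, Matrix.zero_mul, Matrix.one_mul,
    Matrix.neg_mul, zero_add, add_zero, neg_zero] at hcomm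
  rw [Matrix.fromBlocks_inj] at hcomm
  obtain ⟨h11, h12, h21, h22⟩ := hcomm
  set X := S.toBlocks₁₁ with hXdef
  set Y := S.toBlocks₁₂ with hYdef
  have hS : S = fromBlocks X Y (-Y) X := by
    conv_lhs => rw [← Matrix.fromBlocks_toBlocks S]
    rw [show S.toBlocks₂₁ = -Y from h11.symm, show S.toBlocks₂₂ = X from h12.symm]
  -- orthogonality relations
  have hSSt : S * Sᵀ = 1 := mul_eq_one_comm.mp hOrth
  rw [hS, Matrix.fromBlocks_transpose] at hOrth hSSt
  rw [Matrix.fromBlocks_multiply, ← Matrix.fromBlocks_one, Matrix.fromBlocks_inj] at hOrth hSSt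
  obtain ⟨r1, r2, -, -⟩ := hOrth
  obtain ⟨r3, r4, -, -⟩ := hSSt
  simp only [Matrix.transpose_neg, Matrix.neg_mul, Matrix.mul_neg, neg_neg] at r1 r2 r3 r4
  have hg : Yᵀ * X = Xᵀ * Y := by rwa [add_neg_eq_zero, eq_comm] at r2
  -- the off-diagonal block
  have hVxp : (S * fromBlocks (diagonal d) 0 0 (diagonal fun i => (d i)⁻¹) * Sᵀ).toBlocks₁₂
      = Y * diagonal (fun i => (d i)⁻¹) * Xᵀ - X * diagonal d * Yᵀ := by
    rw [hS, Matrix.fromBlocks_transpose, Matrix.fromBlocks_multiply, Matrix.fromBlocks_multiply]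
    rw [Matrix.toBlocks_fromBlocks₁₂]
    simp only [Matrix.mul_zero, Matrix.zero_mul, Matrix.mul_neg, Matrix.neg_mul,
      Matrix.transpose_neg, add_zero, zero_add, neg_neg]
    abel
  rw [hVxp]
  -- expand the Frobenius norm
  rw [expand_frob X Y (diagonal d) (diagonal fun i => (d i)⁻¹)
    (Matrix.diagonal_transpose d) (Matrix.diagonal_transpose _), hg]
  rw [trace_diag_mul, trace_diag_mul, trace_diag_mul, trace_diag_mul, sum_comb]
  -- entrywise data
  set a : Matrix (Fin m) (Fin m) ℝ := Xᵀ * X with ha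
  set g : Matrix (Fin m) (Fin m) ℝ := Xᵀ * Y with hgdef
  have hb_app : ∀ j k, (Yᵀ * Y) j k = (if j = k then (1:ℝ) else 0) - a j k := by
    intro j k
    have := congrFun (congrFun r1 j) k
    simp only [Matrix.add_apply, Matrix.one_apply] at this
    linarith [this]
  have ha_sym : ∀ j k, a k j = a j k := by
    intro j k
    simp only [ha, Matrix.mul_apply, Matrix.transpose_apply]
    exact Finset.sum_congr rfl fun i _ => mul_comm _ _
  have hg_symM : gᵀ = g := by
    rw [hgdef, Matrix.transpose_mul, Matrix.transpose_transpose, hg]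
  have hg_sym : ∀ j k, g k j = g j k := by
    intro j k
    conv_lhs => rw [← hg_symM]
    rfl
  -- the R, J matrices
  set R : Matrix (Fin m) (Fin m) ℝ := Xᵀ*X - Yᵀ*Y with hRdef
  set J : Matrix (Fin m) (Fin m) ℝ := Xᵀ*Y + Yᵀ*X with hJdef
  have hR_app : ∀ j k, R j k = a j k + a j k - (if j = k then (1:ℝ) else 0) := by
    intro j k
    simp only [hRdef, Matrix.sub_apply, hb_app j k]
    ring
  have hJ_app : ∀ j k, J j k = g j k + g j k := by
    intro j k
    simp only [hJdef, Matrix.add_apply]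
    have : (Yᵀ * X) j k = g j k := by rw [hg]
    rw [this]
  have hRJm : frobSq R + frobSq J = m := by
    have hRT : Rᵀ = R := by
      rw [hRdef, Matrix.transpose_sub, Matrix.transpose_mul, Matrix.transpose_mul,
        Matrix.transpose_transpose, Matrix.transpose_transpose]
    have hJT : Jᵀ = J := by
      rw [hJdef, Matrix.transpose_add, Matrix.transpose_mul, Matrix.transpose_mul,
        Matrix.transpose_transpose, Matrix.transpose_transpose, add_comm]
    rw [frobSq_eq_trace, frobSq_eq_trace, hRT, hJT, ← Matrix.trace_add,
      RJ_identity X Y r1 hg r3, Matrix.trace_one]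
    simp
  -- entrywise bound
  set c : Fin m → Fin m → ℝ := fun j k => (d j - (d j)⁻¹)/2*((d k - (d k)⁻¹)/2)
      + (d j + (d j)⁻¹)/2*((d k + (d k)⁻¹)/2) with hcdef
  have hmain : ∀ j k, (fun i => (d i)⁻¹) j * (fun i => (d i)⁻¹) k * (a j k * ((Yᵀ*Y) k j))
        + d j * d k * ((Yᵀ*Y) j k * a k j)
        - (fun i => (d i)⁻¹) j * d k * (g j k * g k j)
        - d j * (fun i => (d i)⁻¹) k * (g j k * g k j)
      ≤ ((if j = k then c j k else 0) - (R j k)^2 - (J j k)^2)/2 := by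
    intro j k
    rw [hb_app k j, hb_app j k, ha_sym j k, hg_sym j k, hR_app j k, hJ_app j k]
    by_cases hjk : j = k
    · subst hjk
      simp only [eq_self_iff_true, if_true, hcdef]
      refine le_trans (le_of_eq (by ring)) (le_trans (entry_diag (d j) (a j j) (g j j) (hd j))
        (le_of_eq (by ring)))
    · simp only [if_neg hjk, if_neg (Ne.symm hjk)]
      refine le_trans (le_of_eq (by ring)) (le_trans (entry_off (d j) (d k) (a j k) (g j k)
        (hd j) (hd k)) (le_of_eq (by ring)))
  have hstep : (∑ j, ∑ k, ((fun i => (d i)⁻¹) j * (fun i => (d i)⁻¹) k * (a j k * ((Yᵀ*Y) k j))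
        + d j * d k * ((Yᵀ*Y) j k * a k j)
        - (fun i => (d i)⁻¹) j * d k * (g j k * g k j)
        - d j * (fun i => (d i)⁻¹) k * (g j k * g k j)))
      ≤ ∑ j, ∑ k, (((if j = k then c j k else 0) - (R j k)^2 - (J j k)^2)/2) :=
    Finset.sum_le_sum fun j _ => Finset.sum_le_sum fun k _ => hmain j k
  refine le_trans (le_trans (le_of_eq ?_) hstep) ?_
  · rfl
  -- now compute the RHS sum and finish
  have hsum : ∑ j, ∑ k, (((if j = k then c j k else 0) - (R j k)^2 - (J j k)^2)/2)
      = ∑ j, ((d j - (d j)⁻¹)/2)^2 := by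
    have expand : ∀ j : Fin m, ∑ k, (((if j = k then c j k else 0) - (R j k)^2 - (J j k)^2)/2)
        = (c j j)/2 - (∑ k, (R j k)^2)/2 - (∑ k, (J j k)^2)/2 := by
      intro j
      rw [show ∀ f g h : Fin m → ℝ, ∑ k, ((f k - g k - h k)/2) =
        (∑ k, f k)/2 - (∑ k, g k)/2 - (∑ k, h k)/2 from fun f g h => by
          rw [← Finset.sum_div, Finset.sum_sub_distrib, Finset.sum_sub_distrib,
            sub_div, sub_div]]
      congr 2
      rw [Finset.sum_ite_eq]
      simp
    rw [Finset.sum_congr rfl fun j _ => expand j]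
    have hsplit : ∑ j, ((c j j)/2 - (∑ k, (R j k)^2)/2 - (∑ k, (J j k)^2)/2)
        = (∑ j, (c j j)/2) - frobSq R / 2 - frobSq J / 2 := by
      rw [Finset.sum_sub_distrib, Finset.sum_sub_distrib, ← Finset.sum_div, ← Finset.sum_div,
        ← Finset.sum_div]
      rw [frobSq, frobSq]
    rw [hsplit]
    have hcjj : ∀ j : Fin m, (c j j)/2 = ((d j - (d j)⁻¹)/2)^2 + 1/2 := by
      intro j
      simp only [hcdef]
      nlinarith [hdinv j]
    rw [Finset.sum_congr rfl fun j _ => hcjj j, Finset.sum_add_distrib]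
    simp only [Finset.sum_const, Finset.card_univ, Fintype.card_fin, nsmul_eq_mul]
    linarith [hRJm]
  rw [hsum]
  -- final scalar inequality
  set ν : Fin m → ℝ := fun j => (d j + (d j)⁻¹)/2 - 1 with hν
  have hν0 : ∀ j, 0 ≤ ν j := by
    intro j
    have := amgm_pair (d j) ((d j)⁻¹) (hd0 j) (inv_pos.mpr (hd0 j)) (hdinv j)
    simp only [hν]
    linarith
  have hσν : ∀ j, ((d j - (d j)⁻¹)/2)^2 = (ν j)^2 + 2 * ν j := by
    intro j
    simp only [hν]
    nlinarith [hdinv j]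
  have hEν : E - 2*m = 2 * ∑ j, ν j := by
    rw [hE, Finset.mul_sum]
    rw [Finset.sum_congr rfl (fun j _ => show 2 * ν j = (d j + 1/d j) - 2 from by
      simp only [hν, one_div]; ring)]
    rw [Finset.sum_sub_distrib]
    simp only [Finset.sum_const, Finset.card_univ, Fintype.card_fin, nsmul_eq_mul]
    ring
  rw [Finset.sum_congr rfl fun j _ => hσν j, Finset.sum_add_distrib, hEν]
  have hsq : ∑ j, (ν j)^2 ≤ (∑ j, ν j)^2 :=
    Finset.sum_sq_le_sq_sum_of_nonneg fun j _ => hν0 j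
  rw [← Finset.mul_sum]
  nlinarith [hsq]
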